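/- Let Z be a real-valued random variable with finite second moment, mean m = E[Z] and variance σ² = Var(Z), and let β ∈ (0,1). If √(1−β)·σ + √β·m ≤ 0, then P(Z ≤ 0) ≥ 1 − β. -/

import Mathlib

open MeasureTheory ProbabilityTheory

/-- Theorem (Chebyshev–Cantelli sufficiency for chance constraints): if a real random
variable `Z` with finite second moment, mean `m` and standard deviation `σ = √Var(Z)`
satisfies `√(1-β)·σ + √β·m ≤ 0` for `β ∈ (0,1)`, then `P(Z ≤ 0) ≥ 1 - β`. -/
theorem chance_constraint_of_mean_variance
    {Ω : Type*} [MeasurableSpace Ω] (μ : Measure Ω) [IsProbabilityMeasure μ]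
    (Z : Ω → ℝ) (hZ : MemLp Z 2 μ) (β : ℝ) (hβ : β ∈ Set.Ioo (0 : ℝ) 1)
    (h : Real.sqrt (1 - β) * Real.sqrt (variance Z μ)
        + Real.sqrt β * (∫ ω, Z ω ∂μ) ≤ 0) :
    1 - β ≤ (μ {ω | Z ω ≤ 0}).toReal := by
  obtain ⟨hβ0, hβ1⟩ := hβ
  set m := ∫ ω, Z ω ∂μ with hm
  set V := variance Z μ with hV
  have hV0 : 0 ≤ V := variance_nonneg _ _
  -- general closing step: if μ {0 ≤ Z} has small measure we are done
  have close : ∀ b : ℝ, (μ {ω | 0 ≤ Z ω}).toReal ≤ b → 1 - b ≤ (μ {ω | Z ω ≤ 0}).toReal := by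
    intro b hb
    have huniv : (1 : ENNReal) ≤ μ {ω | Z ω ≤ 0} + μ {ω | 0 ≤ Z ω} := by
      rw [← measure_univ (μ := μ)]
      refine le_trans (measure_mono ?_) (measure_union_le _ _)
      intro ω _
      rcases le_or_gt (Z ω) 0 with h1 | h1
      · exact Or.inl h1
      · exact Or.inr h1.le
    have hfin1 : μ {ω | Z ω ≤ 0} ≠ ⊤ := measure_ne_top _ _
    have hfin2 : μ {ω | 0 ≤ Z ω} ≠ ⊤ := measure_ne_top _ _
    have := ENNReal.toReal_mono (by finiteness) huniv
    rw [ENNReal.toReal_add hfin1 hfin2, ENNReal.toReal_one] at this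
    linarith
  rcases lt_or_ge m 0 with hmneg | hmpos
  · -- main case: Cantelli's inequality
    set t := -m with htdef
    have ht : 0 < t := neg_pos.2 hmneg
    set s := V / t with hs
    have hs0 : 0 ≤ s := div_nonneg hV0 ht.le
    have hst : t * s = V := by
      rw [hs, mul_div_cancel₀ _ ht.ne']
    have hint1 : Integrable Z μ := hZ.integrable one_le_two
    have hint2 : Integrable (fun ω => Z ω ^ 2) μ := hZ.integrable_sq
    have hexp : (fun ω => (Z ω - m + s) ^ 2)
        = fun ω => Z ω ^ 2 + (2 * (s - m)) * Z ω + (s - m) ^ 2 := by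
      ext ω; ring
    have hf_int : Integrable (fun ω => (Z ω - m + s) ^ 2) μ := by
      rw [hexp]
      exact (hint2.add (hint1.const_mul _)).add (integrable_const _)
    have hVdef : V = (∫ ω, Z ω ^ 2 ∂μ) - m ^ 2 := by
      rw [hV, variance_eq_sub hZ]; rfl
    have hmean : ∫ ω, (Z ω - m + s) ^ 2 ∂μ = V + s ^ 2 := by
      rw [hexp]
      have hi1 : Integrable (fun ω => 2 * (s - m) * Z ω) μ := hint1.const_mul _
      have hi2 : Integrable (fun ω => Z ω ^ 2 + 2 * (s - m) * Z ω) μ := hint2.add hi1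
      rw [integral_add hi2 (integrable_const _), integral_add hint2 hi1,
        integral_const_mul, integral_const]
      simp only [measure_univ, probReal_univ, ENNReal.toReal_one, smul_eq_mul, one_mul]
      rw [← hm]
      nlinarith [hVdef]
    have markov := mul_meas_ge_le_integral_of_nonneg
      (ae_of_all μ fun ω => sq_nonneg (Z ω - m + s)) hf_int ((t + s) ^ 2)
    rw [hmean] at markov
    have hsub : μ {ω | 0 ≤ Z ω} ≤ μ {x | (t + s) ^ 2 ≤ (Z x - m + s) ^ 2} := by
      apply measure_mono
      intro ω hω
      have h1 : t + s ≤ Z ω - m + s := by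
        simp only [Set.mem_setOf_eq] at hω
        simp only [htdef]; linarith
      exact pow_le_pow_left₀ (by positivity) h1 2
    have hsubR : (μ {ω | 0 ≤ Z ω}).toReal ≤ (μ {x | (t + s) ^ 2 ≤ (Z x - m + s) ^ 2}).toReal :=
      ENNReal.toReal_mono (measure_ne_top _ _) hsub
    set P := (μ {ω | 0 ≤ Z ω}).toReal with hP
    have hP0 : 0 ≤ P := ENNReal.toReal_nonneg
    have hPmark : (t + s) ^ 2 * P ≤ V + s ^ 2 := by
      calc (t + s) ^ 2 * P ≤ (t + s) ^ 2 * (μ {x | (t + s) ^ 2 ≤ (Z x - m + s) ^ 2}).toReal :=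
            mul_le_mul_of_nonneg_left hsubR (by positivity)
        _ ≤ V + s ^ 2 := markov
    -- squared hypothesis: (1-β)·V ≤ β·t²
    have hsq : (1 - β) * V ≤ β * t ^ 2 := by
      have ha : 0 ≤ Real.sqrt (1 - β) * Real.sqrt V := by positivity
      have hb : Real.sqrt (1 - β) * Real.sqrt V ≤ Real.sqrt β * t := by
        have : Real.sqrt β * m = -(Real.sqrt β * t) := by rw [htdef]; ring
        linarith [h, this]
      have := mul_self_le_mul_self ha hb
      have e1 : Real.sqrt (1 - β) * Real.sqrt V * (Real.sqrt (1 - β) * Real.sqrt V)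
          = (1 - β) * V := by
        rw [show Real.sqrt (1 - β) * Real.sqrt V * (Real.sqrt (1 - β) * Real.sqrt V)
            = (Real.sqrt (1 - β) * Real.sqrt (1 - β)) * (Real.sqrt V * Real.sqrt V) by ring,
          Real.mul_self_sqrt (by linarith), Real.mul_self_sqrt hV0]
      have e2 : Real.sqrt β * t * (Real.sqrt β * t) = β * t ^ 2 := by
        rw [show Real.sqrt β * t * (Real.sqrt β * t)
            = (Real.sqrt β * Real.sqrt β) * (t * t) by ring,
          Real.mul_self_sqrt hβ0.le]; ring
      rw [e1, e2] at this
      exact this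
    have h2 : V ≤ β * (t ^ 2 + V) := by nlinarith [hsq]
    have h4 : V * (t ^ 2 + V) ≤ β * (t ^ 2 + V) ^ 2 := by
      calc V * (t ^ 2 + V) ≤ (β * (t ^ 2 + V)) * (t ^ 2 + V) :=
            mul_le_mul_of_nonneg_right h2 (by positivity)
        _ = β * (t ^ 2 + V) ^ 2 := by ring
    have h3 : V + s ^ 2 ≤ β * (t + s) ^ 2 := by
      have e1 : (V + s ^ 2) * t ^ 2 = V * (t ^ 2 + V) := by
        linear_combination (t * s + V) * hst
      have e2 : β * (t + s) ^ 2 * t ^ 2 = β * (t ^ 2 + V) ^ 2 := by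
        linear_combination (β * (t * (t + s) + t ^ 2 + V)) * hst
      have h5 : (V + s ^ 2) * t ^ 2 ≤ β * (t + s) ^ 2 * t ^ 2 := by
        rw [e1, e2]; exact h4
      exact le_of_mul_le_mul_right h5 (by positivity)
    have hPβ : P ≤ β := by
      have h6 : (t + s) ^ 2 * P ≤ (t + s) ^ 2 * β := by
        calc (t + s) ^ 2 * P ≤ V + s ^ 2 := hPmark
          _ ≤ β * (t + s) ^ 2 := h3
          _ = (t + s) ^ 2 * β := by ring
      exact le_of_mul_le_mul_left h6 (by positivity)
    exact close β hPβ
  · -- degenerate case: m ≥ 0 forces V = 0 and m = 0, so Z = 0 a.e.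
    have hsV : Real.sqrt (1 - β) * Real.sqrt V = 0 ∧ m = 0 := by
      have ha : 0 ≤ Real.sqrt (1 - β) * Real.sqrt V := by positivity
      have hb : 0 ≤ Real.sqrt β * m := by positivity
      have hβpos : 0 < Real.sqrt β := Real.sqrt_pos.2 hβ0
      constructor
      · linarith
      · nlinarith
    have hVzero : V = 0 := by
      have h1β : 0 < Real.sqrt (1 - β) := Real.sqrt_pos.2 (by linarith)
      have : Real.sqrt V = 0 := by
        rcases mul_eq_zero.1 hsV.1 with h' | h'
        · exact absurd h' h1β.ne'
        · exact h'
      nlinarith [Real.sq_sqrt hV0]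
    have hevar : evariance Z μ = 0 := by
      have hlt := hZ.evariance_lt_top
      have : (evariance Z μ).toReal = 0 := hVzero
      exact (ENNReal.toReal_eq_zero_iff _).1 this |>.resolve_right hlt.ne
    have hae : Z =ᵐ[μ] fun _ => m := by
      have := (evariance_eq_zero_iff (hZ.aestronglyMeasurable.aemeasurable)).1 hevar
      exact this
    have hae0 : ∀ᵐ ω ∂μ, Z ω ≤ 0 := by
      filter_upwards [hae] with ω hω
      rw [hω, hsV.2]
    have : μ {ω | Z ω ≤ 0} = 1 := by
      have hcompl : μ {ω | ¬ Z ω ≤ 0} = 0 := by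
        rw [← ae_iff] at *; exact hae0
      have h1 : (1 : ENNReal) ≤ μ {ω | Z ω ≤ 0} := by
        rw [← measure_univ (μ := μ)]
        calc μ Set.univ ≤ μ {ω | Z ω ≤ 0} + μ {ω | ¬ Z ω ≤ 0} := by
              refine le_trans (measure_mono ?_) (measure_union_le _ _)
              intro ω _
              by_cases hω : Z ω ≤ 0
              · exact Or.inl hω
              · exact Or.inr hω
          _ = μ {ω | Z ω ≤ 0} := by rw [hcompl, add_zero]
      exact le_antisymm prob_le_one h1
    rw [this]
    simp only [ENNReal.toReal_one]
    linarith
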